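/- Let ℓ ∈ ℕ, let h : [0,∞) → ℝ be continuous with h(0) = 0 and h = 0 on [b,∞) for some b ∈ (0,1), and let f : ℝ² → ℝ be the continuous function with f(ρ·(cos α, sin α)) = h(ρ)·cos(ℓα) for all ρ > 0, α ∈ ℝ, and f(0) = 0. Define the V-line transform (Rf)(φ,ψ) = Σ_{σ=±1} ∫₀^∞ f( (cos φ, sin φ) − r·(cos(φ−σψ), sin(φ−σψ)) ) dr for φ ∈ ℝ, ψ ∈ (0,π/2). Then for all φ ∈ ℝ and ψ ∈ (0,π/2): (Rf)(φ,ψ) = 2·cos(ℓφ) · ∫_{sin ψ}^{1} h(ρ) · ρ · K_ℓ(sin ψ, ρ) / √(ρ² − sin²ψ) dρ, where K_ℓ(s,ρ) = Σ_{σ=±1} σ^ℓ · cos( ℓ·(arcsin(s/ρ) − σ·arcsin(s)) ). -/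

import Mathlib

open MeasureTheory Real Set

/-- The V-line (conical) Radon transform in `ℝ²` of a continuous compactly supported
function `f`: `(Rf)(φ,ψ) = Σ_{σ=±1} ∫₀^∞ f((cos φ, sin φ) - r (cos(φ-σψ), sin(φ-σψ))) dr`. -/
noncomputable def vLine (f : ℝ × ℝ → ℝ) (φ ψ : ℝ) : ℝ :=
  (∫ r in Set.Ioi (0 : ℝ),
      f (Real.cos φ - r * Real.cos (φ - ψ), Real.sin φ - r * Real.sin (φ - ψ))) +
    ∫ r in Set.Ioi (0 : ℝ),
      f (Real.cos φ - r * Real.cos (φ + ψ), Real.sin φ - r * Real.sin (φ + ψ))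

/-- The 2D kernel `K_ℓ(s,ρ) = Σ_{σ=±1} σ^ℓ cos(ℓ (arcsin(s/ρ) - σ arcsin s))`. -/
noncomputable def K2 (ℓ : ℕ) (s ρ : ℝ) : ℝ :=
  Real.cos ((ℓ : ℝ) * (Real.arcsin (s / ρ) - Real.arcsin s)) +
    (-1 : ℝ) ^ ℓ * Real.cos ((ℓ : ℝ) * (Real.arcsin (s / ρ) + Real.arcsin s))


lemma fvan {ℓ : ℕ} {h : ℝ → ℝ} {b : ℝ} (hb0 : 0 < b) (hhb : ∀ x ≥ b, h x = 0)
    {f : ℝ × ℝ → ℝ}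
    (hf : ∀ ρ > (0 : ℝ), ∀ α : ℝ,
      f (ρ * Real.cos α, ρ * Real.sin α) = h ρ * Real.cos ((ℓ : ℝ) * α))
    (p : ℝ × ℝ) (hp : b ≤ Real.sqrt (p.1 ^ 2 + p.2 ^ 2)) : f p = 0 := by
  set z : ℂ := ⟨p.1, p.2⟩ with hz
  have habs : ‖z‖ = Real.sqrt (p.1 ^ 2 + p.2 ^ 2) := by
    rw [Complex.norm_def, Complex.normSq_apply]
    norm_num [hz]
    ring_nf
  have hble : b ≤ ‖z‖ := habs ▸ hp
  have hρ : 0 < ‖z‖ := lt_of_lt_of_le hb0 hble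
  have h1 : ‖z‖ * Real.cos (Complex.arg z) = p.1 := Complex.norm_mul_cos_arg z
  have h2 : ‖z‖ * Real.sin (Complex.arg z) = p.2 := Complex.norm_mul_sin_arg z
  have : f p = f (‖z‖ * Real.cos (Complex.arg z),
      ‖z‖ * Real.sin (Complex.arg z)) := by rw [h1, h2]
  rw [this, hf _ hρ, hhb _ hble, zero_mul]

set_option maxHeartbeats 2000000 in
lemma ray (ℓ : ℕ) (h : ℝ → ℝ) (b : ℝ) (hb0 : 0 < b) (hb1 : b < 1)
    (hhb : ∀ x ≥ b, h x = 0)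
    (f : ℝ × ℝ → ℝ) (hfc : Continuous f)
    (hf : ∀ ρ > (0 : ℝ), ∀ α : ℝ,
      f (ρ * Real.cos α, ρ * Real.sin α) = h ρ * Real.cos ((ℓ : ℝ) * α))
    (φ ψ σ θ : ℝ) (hσ : σ = 1 ∨ σ = -1) (hθ : θ = φ - σ * ψ)
    (hψ0 : 0 < ψ) (hψ2 : ψ < Real.pi / 2) :
    IntegrableOn (fun ρ => h ρ * ρ / Real.sqrt (ρ ^ 2 - Real.sin ψ ^ 2) *
        (Real.cos ((ℓ : ℝ) * (φ + σ * (Real.arcsin (Real.sin ψ / ρ) - ψ))) +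
          (-1 : ℝ) ^ ℓ * Real.cos ((ℓ : ℝ) * (φ - σ * (Real.arcsin (Real.sin ψ / ρ) + ψ)))))
      (Set.Ioo (Real.sin ψ) 1) ∧
    (∫ r in Set.Ioi (0 : ℝ), f (Real.cos φ - r * Real.cos θ, Real.sin φ - r * Real.sin θ)) =
      ∫ ρ in Set.Ioo (Real.sin ψ) 1, h ρ * ρ / Real.sqrt (ρ ^ 2 - Real.sin ψ ^ 2) *
        (Real.cos ((ℓ : ℝ) * (φ + σ * (Real.arcsin (Real.sin ψ / ρ) - ψ))) +
          (-1 : ℝ) ^ ℓ * Real.cos ((ℓ : ℝ) * (φ - σ * (Real.arcsin (Real.sin ψ / ρ) + ψ)))) := by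
  have hπ := Real.pi_pos
  have hs0 : 0 < Real.sin ψ := Real.sin_pos_of_pos_of_lt_pi hψ0 (by linarith)
  have hc0 : 0 < Real.cos ψ := Real.cos_pos_of_mem_Ioo ⟨by linarith, hψ2⟩
  have hsc : Real.sin ψ ^ 2 + Real.cos ψ ^ 2 = 1 := Real.sin_sq_add_cos_sq ψ
  have hs1 : Real.sin ψ < 1 := by nlinarith
  have hc1 : Real.cos ψ < 1 := by nlinarith
  have hcσ : ∀ x : ℝ, Real.cos (σ * x) = Real.cos x := by
    rcases hσ with rfl | rfl <;> intro x <;> simp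
  have hsσ : ∀ x : ℝ, Real.sin (σ * x) = σ * Real.sin x := by
    rcases hσ with rfl | rfl <;> intro x <;> simp
  set s := Real.sin ψ
  set c := Real.cos ψ
  set G : ℝ → ℝ := fun r => f (Real.cos φ - r * Real.cos θ, Real.sin φ - r * Real.sin θ)
    with hG
  -- squared distance to origin along the ray
  have hnorm : ∀ r : ℝ, (Real.cos φ - r * Real.cos θ) ^ 2 +
      (Real.sin φ - r * Real.sin θ) ^ 2 = (r - c) ^ 2 + s ^ 2 := by
    intro r
    have e1 : Real.cos φ * Real.cos θ + Real.sin φ * Real.sin θ = c := by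
      rw [← Real.cos_sub, show φ - θ = σ * ψ by rw [hθ]; ring, hcσ]
    have e2 := Real.sin_sq_add_cos_sq φ
    have e3 := Real.sin_sq_add_cos_sq θ
    linear_combination e2 + r ^ 2 * e3 - 2 * r * e1 - hsc
  -- G vanishes outside [-2,2]
  have hGvan : ∀ r : ℝ, r ∉ Set.Icc (-2 : ℝ) 2 → G r = 0 := by
    intro r hr
    apply fvan hb0 hhb hf
    simp only
    rw [hnorm r]
    have : 1 ≤ (r - c) ^ 2 + s ^ 2 := by
      simp only [Set.mem_Icc, not_and_or, not_le] at hr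
      rcases hr with hr | hr <;> nlinarith
    calc b ≤ 1 := hb1.le
      _ = Real.sqrt 1 := by rw [Real.sqrt_one]
      _ ≤ _ := Real.sqrt_le_sqrt this
  have hGcont : Continuous G := by
    apply hfc.comp
    exact (continuous_const.sub (continuous_id.mul continuous_const)).prodMk
      (continuous_const.sub (continuous_id.mul continuous_const))
  have hGint : Integrable G := by
    apply hGcont.integrable_of_hasCompactSupport
    exact HasCompactSupport.intro isCompact_Icc hGvan
  -- pointwise values of G under the substitution
  have hkey : ∀ ρ : ℝ, s < ρ →
      (G (c - Real.sqrt (ρ ^ 2 - s ^ 2)) =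
        h ρ * Real.cos ((ℓ : ℝ) * (φ + σ * (Real.arcsin (s / ρ) - ψ)))) ∧
      (G (c + Real.sqrt (ρ ^ 2 - s ^ 2)) =
        h ρ * ((-1 : ℝ) ^ ℓ * Real.cos ((ℓ : ℝ) * (φ - σ * (Real.arcsin (s / ρ) + ψ))))) := by
    intro ρ hρ
    have hρ0 : 0 < ρ := lt_trans hs0 hρ
    have hd0 : 0 < ρ ^ 2 - s ^ 2 := by nlinarith
    set w := Real.sqrt (ρ ^ 2 - s ^ 2) with hwdef
    have hw0 : 0 < w := Real.sqrt_pos.mpr hd0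
    set β := Real.arcsin (s / ρ) with hβdef
    have hsinβ : ρ * Real.sin β = s := by
      rw [hβdef, Real.sin_arcsin (le_trans (by norm_num : (-1:ℝ) ≤ 0) (by positivity)) (by rw [div_le_one hρ0]; exact hρ.le)]
      field_simp
    have hcosβ : ρ * Real.cos β = w := by
      rw [hβdef, Real.cos_arcsin,
        show 1 - (s / ρ) ^ 2 = (ρ ^ 2 - s ^ 2) / ρ ^ 2 by field_simp,
        Real.sqrt_div hd0.le, Real.sqrt_sq hρ0.le, hwdef]
      field_simp
    constructor
    · have hA1 : Real.cos φ - (c - w) * Real.cos θ = ρ * Real.cos (φ + σ * (β - ψ)) := by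
        rw [show φ + σ * (β - ψ) = θ + σ * β by rw [hθ]; ring,
            show φ = θ + σ * ψ by rw [hθ]; ring]
        rw [Real.cos_add, Real.cos_add, hcσ, hcσ, hsσ, hsσ]
        linear_combination (- Real.cos θ) * hcosβ + σ * Real.sin θ * hsinβ
      have hA2 : Real.sin φ - (c - w) * Real.sin θ = ρ * Real.sin (φ + σ * (β - ψ)) := by
        rw [show φ + σ * (β - ψ) = θ + σ * β by rw [hθ]; ring,
            show φ = θ + σ * ψ by rw [hθ]; ring]
        rw [Real.sin_add, Real.sin_add, hcσ, hcσ, hsσ, hsσ]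
        linear_combination (- Real.sin θ) * hcosβ - σ * Real.cos θ * hsinβ
      simp only [hG]
      rw [hA1, hA2, hf ρ hρ0]
    · have hB1 : Real.cos φ - (c + w) * Real.cos θ =
          ρ * Real.cos (φ + σ * (Real.pi - β - ψ)) := by
        rw [show φ + σ * (Real.pi - β - ψ) = θ + σ * (Real.pi - β) by rw [hθ]; ring,
            show φ = θ + σ * ψ by rw [hθ]; ring]
        rw [Real.cos_add, Real.cos_add, hcσ, hcσ, hsσ, hsσ, Real.cos_pi_sub, Real.sin_pi_sub]
        linear_combination Real.cos θ * hcosβ + σ * Real.sin θ * hsinβ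
      have hB2 : Real.sin φ - (c + w) * Real.sin θ =
          ρ * Real.sin (φ + σ * (Real.pi - β - ψ)) := by
        rw [show φ + σ * (Real.pi - β - ψ) = θ + σ * (Real.pi - β) by rw [hθ]; ring,
            show φ = θ + σ * ψ by rw [hθ]; ring]
        rw [Real.sin_add, Real.sin_add, hcσ, hcσ, hsσ, hsσ, Real.cos_pi_sub, Real.sin_pi_sub]
        linear_combination Real.sin θ * hcosβ - σ * Real.cos θ * hsinβ
      simp only [hG]
      rw [hB1, hB2, hf ρ hρ0]
      congr 1
      rcases hσ with rfl | rfl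
      · rw [show (ℓ : ℝ) * (φ + 1 * (Real.pi - β - ψ)) =
            (ℓ : ℝ) * Real.pi - ((ℓ : ℝ) * (β + ψ - φ)) by ring,
          Real.cos_nat_mul_pi_sub,
          show (ℓ : ℝ) * (β + ψ - φ) = -((ℓ : ℝ) * (φ - 1 * (β + ψ))) by ring,
          Real.cos_neg]
      · rw [show (ℓ : ℝ) * (φ + -1 * (Real.pi - β - ψ)) =
            -((ℓ : ℝ) * Real.pi - ((ℓ : ℝ) * (φ + β + ψ))) by ring,
          Real.cos_neg, Real.cos_nat_mul_pi_sub,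
          show (ℓ : ℝ) * (φ + β + ψ) = (ℓ : ℝ) * (φ - -1 * (β + ψ)) by ring]
  -- derivative of the square root expression
  have hderiv : ∀ ρ : ℝ, s < ρ → HasDerivAt (fun x : ℝ => Real.sqrt (x ^ 2 - s ^ 2))
      (ρ / Real.sqrt (ρ ^ 2 - s ^ 2)) ρ := by
    intro ρ hρ
    have hρ0 : 0 < ρ := lt_trans hs0 hρ
    have hd0 : 0 < ρ ^ 2 - s ^ 2 := by nlinarith
    have hsq0 : Real.sqrt (ρ ^ 2 - s ^ 2) ≠ 0 := (Real.sqrt_pos.mpr hd0).ne'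
    have h1 : HasDerivAt (fun x : ℝ => x ^ 2 - s ^ 2) (2 * ρ) ρ := by
      simpa using (hasDerivAt_pow 2 ρ).sub_const (s ^ 2)
    have h2 := h1.sqrt hd0.ne'
    convert h2 using 1
    field_simp
  have hmeas : MeasurableSet (Set.Ioo s 1) := measurableSet_Ioo
  -- near branch substitution
  have hg1der : ∀ ρ ∈ Set.Ioo s 1, HasDerivWithinAt
      (fun ρ => c - Real.sqrt (ρ ^ 2 - s ^ 2))
      (-(ρ / Real.sqrt (ρ ^ 2 - s ^ 2))) (Set.Ioo s 1) ρ :=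
    fun ρ hρ => ((hderiv ρ hρ.1).const_sub c).hasDerivWithinAt
  have hg1inj : Set.InjOn (fun ρ => c - Real.sqrt (ρ ^ 2 - s ^ 2)) (Set.Ioo s 1) := by
    intro a ha a' ha' hab
    have h1 : Real.sqrt (a ^ 2 - s ^ 2) = Real.sqrt (a' ^ 2 - s ^ 2) :=
      sub_right_injective hab
    have h2 : a ^ 2 - s ^ 2 = a' ^ 2 - s ^ 2 := by
      rw [← Real.sq_sqrt (show (0:ℝ) ≤ a ^ 2 - s ^ 2 by nlinarith [ha.1]), h1,
        Real.sq_sqrt (by nlinarith [ha'.1])]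
    have ha0 : 0 < a := lt_trans hs0 ha.1
    have ha0' : 0 < a' := lt_trans hs0 ha'.1
    rw [← Real.sqrt_sq ha0.le, ← Real.sqrt_sq ha0'.le]
    congr 1
    nlinarith [h2]
  have hg1img : (fun ρ => c - Real.sqrt (ρ ^ 2 - s ^ 2)) '' Set.Ioo s 1 = Set.Ioo 0 c := by
    ext x
    constructor
    · rintro ⟨ρ, ⟨h1, h2⟩, rfl⟩
      have hd0 : 0 < ρ ^ 2 - s ^ 2 := by nlinarith
      have hw0 : 0 < Real.sqrt (ρ ^ 2 - s ^ 2) := Real.sqrt_pos.mpr hd0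
      have hwc : Real.sqrt (ρ ^ 2 - s ^ 2) < c := by
        rw [show c = Real.sqrt (c ^ 2) from (Real.sqrt_sq hc0.le).symm]
        exact Real.sqrt_lt_sqrt hd0.le (by nlinarith)
      exact ⟨by simp only; linarith, by simp only; linarith⟩
    · rintro ⟨hx0, hxc⟩
      have hq : x ^ 2 - 2 * x * c + 1 = (x - c) ^ 2 + s ^ 2 := by linear_combination -hsc
      refine ⟨Real.sqrt (x ^ 2 - 2 * x * c + 1), ⟨?_, ?_⟩, ?_⟩
      · rw [show s = Real.sqrt (s ^ 2) from (Real.sqrt_sq hs0.le).symm]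
        exact Real.sqrt_lt_sqrt (by positivity) (by nlinarith)
      · exact (Real.sqrt_lt' one_pos).mpr (by nlinarith)
      · simp only
        rw [Real.sq_sqrt (by nlinarith), show x ^ 2 - 2 * x * c + 1 - s ^ 2 = (x - c) ^ 2 by
          linarith, Real.sqrt_sq_eq_abs, abs_of_neg (by linarith : x - c < 0)]
        ring
  have e₁ : ∫ r in Set.Ioo 0 c, G r = ∫ ρ in Set.Ioo s 1,
      |(-(ρ / Real.sqrt (ρ ^ 2 - s ^ 2)))| • G (c - Real.sqrt (ρ ^ 2 - s ^ 2)) := by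
    rw [← hg1img]
    exact integral_image_eq_integral_abs_deriv_smul hmeas hg1der hg1inj G
  have i₁ : IntegrableOn (fun ρ =>
      |(-(ρ / Real.sqrt (ρ ^ 2 - s ^ 2)))| • G (c - Real.sqrt (ρ ^ 2 - s ^ 2)))
      (Set.Ioo s 1) :=
    (integrableOn_image_iff_integrableOn_abs_deriv_smul hmeas hg1der hg1inj G).mp
      hGint.integrableOn
  have hu₁eq : Set.EqOn (fun ρ =>
      |(-(ρ / Real.sqrt (ρ ^ 2 - s ^ 2)))| • G (c - Real.sqrt (ρ ^ 2 - s ^ 2)))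
      (fun ρ => h ρ * ρ / Real.sqrt (ρ ^ 2 - s ^ 2) *
        Real.cos ((ℓ : ℝ) * (φ + σ * (Real.arcsin (s / ρ) - ψ)))) (Set.Ioo s 1) := by
    intro ρ hρ
    have hρ0 : 0 < ρ := lt_trans hs0 hρ.1
    have hd0 : 0 < ρ ^ 2 - s ^ 2 := by nlinarith [hρ.1]
    have hw0 : 0 < Real.sqrt (ρ ^ 2 - s ^ 2) := Real.sqrt_pos.mpr hd0
    simp only [smul_eq_mul, abs_neg, abs_of_pos (div_pos hρ0 hw0), (hkey ρ hρ.1).1]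
    ring
  have e₁' : ∫ r in Set.Ioo 0 c, G r = ∫ ρ in Set.Ioo s 1,
      h ρ * ρ / Real.sqrt (ρ ^ 2 - s ^ 2) *
        Real.cos ((ℓ : ℝ) * (φ + σ * (Real.arcsin (s / ρ) - ψ))) :=
    e₁.trans (setIntegral_congr_fun hmeas hu₁eq)
  have i₁' : IntegrableOn (fun ρ => h ρ * ρ / Real.sqrt (ρ ^ 2 - s ^ 2) *
      Real.cos ((ℓ : ℝ) * (φ + σ * (Real.arcsin (s / ρ) - ψ)))) (Set.Ioo s 1) :=
    i₁.congr_fun hu₁eq hmeas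
  -- far branch substitution
  have hg2der : ∀ ρ ∈ Set.Ioi s, HasDerivWithinAt
      (fun ρ => c + Real.sqrt (ρ ^ 2 - s ^ 2))
      (ρ / Real.sqrt (ρ ^ 2 - s ^ 2)) (Set.Ioi s) ρ :=
    fun ρ hρ => ((hderiv ρ hρ).const_add c).hasDerivWithinAt
  have hg2inj : Set.InjOn (fun ρ => c + Real.sqrt (ρ ^ 2 - s ^ 2)) (Set.Ioi s) := by
    intro a ha a' ha' hab
    have h1 : Real.sqrt (a ^ 2 - s ^ 2) = Real.sqrt (a' ^ 2 - s ^ 2) :=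
      add_left_cancel hab
    have h2 : a ^ 2 - s ^ 2 = a' ^ 2 - s ^ 2 := by
      rw [← Real.sq_sqrt (show (0:ℝ) ≤ a ^ 2 - s ^ 2 by
          nlinarith [Set.mem_Ioi.mp ha]), h1,
        Real.sq_sqrt (by nlinarith [Set.mem_Ioi.mp ha'])]
    have ha0 : 0 < a := lt_trans hs0 ha
    have ha0' : 0 < a' := lt_trans hs0 ha'
    rw [← Real.sqrt_sq ha0.le, ← Real.sqrt_sq ha0'.le]
    congr 1
    nlinarith [h2]
  have hg2img : (fun ρ => c + Real.sqrt (ρ ^ 2 - s ^ 2)) '' Set.Ioi s = Set.Ioi c := by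
    ext x
    constructor
    · rintro ⟨ρ, hρ, rfl⟩
      have hρs : s < ρ := hρ
      have hd0 : 0 < ρ ^ 2 - s ^ 2 := by nlinarith
      have hw0 : 0 < Real.sqrt (ρ ^ 2 - s ^ 2) := Real.sqrt_pos.mpr hd0
      simp only [Set.mem_Ioi]
      linarith
    · intro hx
      have hxc : c < x := hx
      have hq : x ^ 2 - 2 * x * c + 1 = (x - c) ^ 2 + s ^ 2 := by linear_combination -hsc
      refine ⟨Real.sqrt (x ^ 2 - 2 * x * c + 1), ?_, ?_⟩
      · rw [Set.mem_Ioi, show s = Real.sqrt (s ^ 2) from (Real.sqrt_sq hs0.le).symm]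
        exact Real.sqrt_lt_sqrt (by positivity) (by nlinarith)
      · simp only
        rw [Real.sq_sqrt (by nlinarith), show x ^ 2 - 2 * x * c + 1 - s ^ 2 = (x - c) ^ 2 by
          linarith, Real.sqrt_sq_eq_abs, abs_of_pos (by linarith : 0 < x - c)]
        ring
  have e₂ : ∫ r in Set.Ioi c, G r = ∫ ρ in Set.Ioi s,
      |ρ / Real.sqrt (ρ ^ 2 - s ^ 2)| • G (c + Real.sqrt (ρ ^ 2 - s ^ 2)) := by
    rw [← hg2img]
    exact integral_image_eq_integral_abs_deriv_smul measurableSet_Ioi hg2der hg2inj G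
  have i₂ : IntegrableOn (fun ρ =>
      |ρ / Real.sqrt (ρ ^ 2 - s ^ 2)| • G (c + Real.sqrt (ρ ^ 2 - s ^ 2))) (Set.Ioi s) :=
    (integrableOn_image_iff_integrableOn_abs_deriv_smul measurableSet_Ioi hg2der
      hg2inj G).mp hGint.integrableOn
  have hu₂eq : Set.EqOn (fun ρ =>
      |ρ / Real.sqrt (ρ ^ 2 - s ^ 2)| • G (c + Real.sqrt (ρ ^ 2 - s ^ 2)))
      (fun ρ => h ρ * ρ / Real.sqrt (ρ ^ 2 - s ^ 2) *
        ((-1 : ℝ) ^ ℓ * Real.cos ((ℓ : ℝ) * (φ - σ * (Real.arcsin (s / ρ) + ψ)))))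
      (Set.Ioi s) := by
    intro ρ hρ
    have hρs : s < ρ := hρ
    have hρ0 : 0 < ρ := lt_trans hs0 hρs
    have hd0 : 0 < ρ ^ 2 - s ^ 2 := by nlinarith
    have hw0 : 0 < Real.sqrt (ρ ^ 2 - s ^ 2) := Real.sqrt_pos.mpr hd0
    simp only [smul_eq_mul, abs_of_pos (div_pos hρ0 hw0), (hkey ρ hρs).2]
    ring
  have e₂' : ∫ r in Set.Ioi c, G r = ∫ ρ in Set.Ioi s,
      h ρ * ρ / Real.sqrt (ρ ^ 2 - s ^ 2) *
        ((-1 : ℝ) ^ ℓ * Real.cos ((ℓ : ℝ) * (φ - σ * (Real.arcsin (s / ρ) + ψ)))) :=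
    e₂.trans (setIntegral_congr_fun measurableSet_Ioi hu₂eq)
  have i₂' : IntegrableOn (fun ρ => h ρ * ρ / Real.sqrt (ρ ^ 2 - s ^ 2) *
      ((-1 : ℝ) ^ ℓ * Real.cos ((ℓ : ℝ) * (φ - σ * (Real.arcsin (s / ρ) + ψ)))))
      (Set.Ioi s) := i₂.congr_fun hu₂eq measurableSet_Ioi
  have hvan2 : ∀ ρ : ℝ, (1:ℝ) ≤ ρ → h ρ * ρ / Real.sqrt (ρ ^ 2 - s ^ 2) *
      ((-1 : ℝ) ^ ℓ * Real.cos ((ℓ : ℝ) * (φ - σ * (Real.arcsin (s / ρ) + ψ)))) = 0 := by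
    intro ρ hρ1
    rw [hhb ρ (le_trans hb1.le hρ1)]
    ring
  have e₂'' : (∫ ρ in Set.Ioi s, h ρ * ρ / Real.sqrt (ρ ^ 2 - s ^ 2) *
      ((-1 : ℝ) ^ ℓ * Real.cos ((ℓ : ℝ) * (φ - σ * (Real.arcsin (s / ρ) + ψ))))) =
      ∫ ρ in Set.Ioo s 1, h ρ * ρ / Real.sqrt (ρ ^ 2 - s ^ 2) *
      ((-1 : ℝ) ^ ℓ * Real.cos ((ℓ : ℝ) * (φ - σ * (Real.arcsin (s / ρ) + ψ)))) := by
    rw [show (∫ ρ in Set.Ioi s, h ρ * ρ / Real.sqrt (ρ ^ 2 - s ^ 2) *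
        ((-1 : ℝ) ^ ℓ * Real.cos ((ℓ : ℝ) * (φ - σ * (Real.arcsin (s / ρ) + ψ))))) =
        ∫ ρ in Set.Ioi s, (Set.Ioo s 1).indicator (fun ρ =>
          h ρ * ρ / Real.sqrt (ρ ^ 2 - s ^ 2) *
          ((-1 : ℝ) ^ ℓ * Real.cos ((ℓ : ℝ) * (φ - σ * (Real.arcsin (s / ρ) + ψ))))) ρ from
      setIntegral_congr_fun measurableSet_Ioi (fun ρ hρ => ?_)]
    · rw [setIntegral_indicator hmeas,
        Set.inter_eq_self_of_subset_right Set.Ioo_subset_Ioi_self]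
    · by_cases h1 : ρ < 1
      · rw [Set.indicator_of_mem (Set.mem_Ioo.mpr ⟨hρ, h1⟩)]
      · rw [Set.indicator_of_notMem (fun hm => h1 hm.2), hvan2 ρ (not_lt.mp h1)]
  have i₂'' : IntegrableOn (fun ρ => h ρ * ρ / Real.sqrt (ρ ^ 2 - s ^ 2) *
      ((-1 : ℝ) ^ ℓ * Real.cos ((ℓ : ℝ) * (φ - σ * (Real.arcsin (s / ρ) + ψ)))))
      (Set.Ioo s 1) := i₂'.mono_set Set.Ioo_subset_Ioi_self
  have hsplit : (∫ r in Set.Ioi (0:ℝ), G r) =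
      (∫ r in Set.Ioo 0 c, G r) + ∫ r in Set.Ioi c, G r := by
    rw [← Set.Ioo_union_Ici_eq_Ioi hc0,
      setIntegral_union (by
        rw [Set.disjoint_left]
        exact fun x hx hx' => absurd hx.2 (not_lt.mpr hx')) measurableSet_Ici
      hGint.integrableOn hGint.integrableOn]
    congr 1
    exact setIntegral_congr_set Ioi_ae_eq_Ici.symm
  have isum : IntegrableOn (fun ρ => h ρ * ρ / Real.sqrt (ρ ^ 2 - s ^ 2) *
      Real.cos ((ℓ : ℝ) * (φ + σ * (Real.arcsin (s / ρ) - ψ))) +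
      h ρ * ρ / Real.sqrt (ρ ^ 2 - s ^ 2) *
      ((-1 : ℝ) ^ ℓ * Real.cos ((ℓ : ℝ) * (φ - σ * (Real.arcsin (s / ρ) + ψ)))))
      (Set.Ioo s 1) := i₁'.add i₂''
  constructor
  · exact isum.congr_fun (fun ρ _ => by ring) hmeas
  · rw [hsplit, e₁', e₂', e₂'', ← integral_add i₁' i₂'']
    exact setIntegral_congr_fun hmeas (fun ρ _ => by ring)

theorem stmt17 (ℓ : ℕ) (h : ℝ → ℝ) (hh : Continuous h) (hh0 : h 0 = 0)
    (b : ℝ) (hb : b ∈ Set.Ioo (0 : ℝ) 1) (hhb : ∀ x ≥ b, h x = 0)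
    (f : ℝ × ℝ → ℝ) (hfc : Continuous f)
    (hf : ∀ ρ > (0 : ℝ), ∀ α : ℝ,
      f (ρ * Real.cos α, ρ * Real.sin α) = h ρ * Real.cos ((ℓ : ℝ) * α))
    (hf0 : f (0, 0) = 0)
    (φ : ℝ) (ψ : ℝ) (hψ : ψ ∈ Set.Ioo 0 (Real.pi / 2)) :
    vLine f φ ψ =
      2 * Real.cos ((ℓ : ℝ) * φ) *
        ∫ ρ in (Real.sin ψ)..1,
          h ρ * ρ * K2 ℓ (Real.sin ψ) ρ / Real.sqrt (ρ ^ 2 - Real.sin ψ ^ 2) := by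
  obtain ⟨hb0, hb1⟩ := hb
  obtain ⟨hψ0, hψ2⟩ := hψ
  have hπ := Real.pi_pos
  have hs0 : 0 < Real.sin ψ := Real.sin_pos_of_pos_of_lt_pi hψ0 (by linarith)
  have hc0 : 0 < Real.cos ψ := Real.cos_pos_of_mem_Ioo ⟨by linarith, hψ2⟩
  have hsc : Real.sin ψ ^ 2 + Real.cos ψ ^ 2 = 1 := Real.sin_sq_add_cos_sq ψ
  have hs1 : Real.sin ψ < 1 := by nlinarith
  obtain ⟨i1, e1⟩ := ray ℓ h b hb0 hb1 hhb f hfc hf φ ψ 1 (φ - ψ) (Or.inl rfl)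
    (by ring) hψ0 hψ2
  obtain ⟨i2, e2⟩ := ray ℓ h b hb0 hb1 hhb f hfc hf φ ψ (-1) (φ + ψ) (Or.inr rfl)
    (by ring) hψ0 hψ2
  simp only [vLine]
  rw [e1, e2, ← integral_add i1 i2, intervalIntegral.integral_of_le hs1.le,
    ← setIntegral_congr_set Ioo_ae_eq_Ioc, ← integral_const_mul]
  refine setIntegral_congr_fun measurableSet_Ioo (fun ρ hρ => ?_)
  simp only [K2]
  rw [Real.arcsin_sin (by linarith) (by linarith)]
  set β := Real.arcsin (Real.sin ψ / ρ) with hβ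
  rw [show (ℓ : ℝ) * (φ + 1 * (β - ψ)) = (ℓ : ℝ) * φ + ((ℓ : ℝ) * β - (ℓ : ℝ) * ψ) by ring,
    show (ℓ : ℝ) * (φ - 1 * (β + ψ)) = (ℓ : ℝ) * φ - ((ℓ : ℝ) * β + (ℓ : ℝ) * ψ) by ring,
    show (ℓ : ℝ) * (φ + -1 * (β - ψ)) = (ℓ : ℝ) * φ - ((ℓ : ℝ) * β - (ℓ : ℝ) * ψ) by ring,
    show (ℓ : ℝ) * (φ - -1 * (β + ψ)) = (ℓ : ℝ) * φ + ((ℓ : ℝ) * β + (ℓ : ℝ) * ψ) by ring,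
    show (ℓ : ℝ) * (β - ψ) = (ℓ : ℝ) * β - (ℓ : ℝ) * ψ by ring,
    show (ℓ : ℝ) * (β + ψ) = (ℓ : ℝ) * β + (ℓ : ℝ) * ψ by ring]
  simp only [Real.cos_add, Real.cos_sub]
  ring
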